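/- Let A_p, A_q ∈ ℝ^{n×n}, B_p, B_q ∈ ℝ^{n×m}, K_p ∈ ℝ^{m×n}, and set H = (A_q − A_p) + (B_q − B_p)K_p. Let τ_s > 0, let k ≥ 1 be an integer, and let T ∈ ((k−1)τ_s, kτ_s]; write τ = T − (k−1)τ_s ∈ (0, τ_s]. Let ξ₀ ∈ ℝ^n and ξ(t) = e^{(A_p+B_pK_p)t} ξ₀. Suppose e : ℝ → ℝ^n is continuous, differentiable on [0,T] with e'(t) = A_p e(t), and differentiable on [T, kτ_s] with e'(t) = A_q e(t) + H ξ(t). Then e(kτ_s) = e^{A_q(τ_s−τ)} e^{A_p((k−1)τ_s+τ)} e(0) + (∫_τ^{τ_s} e^{A_q(τ_s−t)} H e^{(A_p+B_pK_p)(t+(k−1)τ_s)} dt) · ξ₀. Consequently, if |e(0)|_∞ ≤ E, then |e(kτ_s)|_∞ ≤ δ̄ |ξ₀|_∞ + γ̄′ E, where δ̄ = sup_{0≤τ′≤τ_s} ‖∫_{τ′}^{τ_s} e^{A_q(τ_s−t)} H e^{(A_p+B_pK_p)(t+(k−1)τ_s)} dt‖_∞ and γ̄′ = sup_{0≤τ′≤τ_s}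 ‖e^{A_q(τ_s−τ′)} e^{A_p((k−1)τ_s+τ′)}‖_∞. -/

import Mathlib

open scoped Matrix
open Set

section PreNorm
variable {n : ℕ}

lemma expEntry_hasDerivAt (A : Matrix (Fin n) (Fin n) ℝ) (t : ℝ) (i j : Fin n) :
    HasDerivAt (fun u : ℝ => NormedSpace.exp (u • A) i j)
      ((A * NormedSpace.exp (t • A)) i j) t := by
  have key : Filter.Tendsto (fun u => slope (fun u : ℝ => NormedSpace.exp (u • A)) t u i j)
      (nhdsWithin t {t}ᶜ) (nhds ((A * NormedSpace.exp (t • A)) i j)) := by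
    letI : NormedRing (Matrix (Fin n) (Fin n) ℝ) := Matrix.linftyOpNormedRing
    letI : NormedAlgebra ℝ (Matrix (Fin n) (Fin n) ℝ) := Matrix.linftyOpNormedAlgebra
    letI : CompleteSpace (Matrix (Fin n) (Fin n) ℝ) := FiniteDimensional.complete ℝ _
    have h2 := hasDerivAt_iff_tendsto_slope.mp (hasDerivAt_exp_smul_const' (𝕂 := ℝ) A t)
    exact (((continuous_apply j).comp (continuous_apply i)).continuousAt.tendsto.comp h2 :)
  rw [hasDerivAt_iff_tendsto_slope]
  refine key.congr (fun u => ?_)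
  simp [slope_def_field, slope, Matrix.sub_apply, Matrix.smul_apply]

lemma expM_add (A : Matrix (Fin n) (Fin n) ℝ) (a b : ℝ) :
    NormedSpace.exp ((a + b) • A) = NormedSpace.exp (a • A) * NormedSpace.exp (b • A) := by
  rw [add_smul]
  exact Matrix.exp_add_of_commute _ _ (((Commute.refl A).smul_left a).smul_right b)

lemma expM_zero (A : Matrix (Fin n) (Fin n) ℝ) :
    NormedSpace.exp ((0 : ℝ) • A) = 1 := by
  rw [zero_smul, NormedSpace.exp_zero]

lemma expM_comm (A : Matrix (Fin n) (Fin n) ℝ) (s : ℝ) :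
    A * NormedSpace.exp (s • A) = NormedSpace.exp (s • A) * A := by
  letI : NormedRing (Matrix (Fin n) (Fin n) ℝ) := Matrix.linftyOpNormedRing
  letI : NormedAlgebra ℝ (Matrix (Fin n) (Fin n) ℝ) := Matrix.linftyOpNormedAlgebra
  letI : CompleteSpace (Matrix (Fin n) (Fin n) ℝ) := FiniteDimensional.complete ℝ _
  exact (((Commute.refl A).smul_right s).exp_right)

end PreNorm

attribute [local instance] Matrix.normedAddCommGroup Matrix.normedSpace

section PostNorm
variable {n : ℕ}

lemma expEntry_continuous (A : Matrix (Fin n) (Fin n) ℝ) (i j : Fin n) :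
    Continuous fun u : ℝ => NormedSpace.exp (u • A) i j :=
  continuous_iff_continuousAt.mpr fun t => (expEntry_hasDerivAt A t i j).continuousAt

lemma continuous_matrix_of_entries {a b : ℕ} {M : ℝ → Matrix (Fin a) (Fin b) ℝ}
    (h : ∀ i j, Continuous fun u => M u i j) : Continuous M := by
  exact (continuous_pi fun i => continuous_pi (h i) :)

lemma continuous_entries_mul {a b c : ℕ} {X : ℝ → Matrix (Fin a) (Fin b) ℝ}
    {Y : ℝ → Matrix (Fin b) (Fin c) ℝ}
    (hX : ∀ i j, Continuous fun u => X u i j) (hY : ∀ i j, Continuous fun u => Y u i j)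
    (i : Fin a) (j : Fin c) : Continuous fun u => (X u * Y u) i j := by
  simp only [Matrix.mul_apply]
  exact continuous_finset_sum _ fun l _ => (hX i l).mul (hY l j)

lemma continuous_matvec {M : ℝ → Matrix (Fin n) (Fin n) ℝ} {f : ℝ → Fin n → ℝ}
    (hM : ∀ i j, Continuous fun u => M u i j) (hf : Continuous f) :
    Continuous fun u => (M u).mulVec (f u) := by
  apply continuous_pi; intro i
  show Continuous fun u => ∑ j, M u i j * f u j
  exact continuous_finset_sum _ fun j _ => (hM i j).mul ((continuous_apply j).comp hf)

lemma hasDerivWithinAt_matvec {M : ℝ → Matrix (Fin n) (Fin n) ℝ}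
    {N : Matrix (Fin n) (Fin n) ℝ} {f : ℝ → Fin n → ℝ} {f' : Fin n → ℝ}
    {s : Set ℝ} {t : ℝ}
    (hM : ∀ i j, HasDerivAt (fun u => M u i j) (N i j) t)
    (hf : HasDerivWithinAt f f' s t) :
    HasDerivWithinAt (fun u => (M u).mulVec (f u))
      (N.mulVec (f t) + (M t).mulVec f') s t := by
  rw [hasDerivWithinAt_pi]
  intro i
  have hfj : ∀ j, HasDerivWithinAt (fun u => f u j) (f' j) s t :=
    fun j => hasDerivWithinAt_pi.mp hf j
  have h := HasDerivWithinAt.sum (u := Finset.univ)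
    (fun j _ => ((hM i j).hasDerivWithinAt.mul (hfj j)))
  have he : (N.mulVec (f t) + (M t).mulVec f') i
      = ∑ j, (N i j * f t j + M t i j * f' j) := by
    simp [Matrix.mulVec, dotProduct, Finset.sum_add_distrib]
  rw [he]
  convert h using 1
  funext u
  simp [Matrix.mulVec, dotProduct, Finset.sum_apply]
end PostNorm

/-- The induced maximum-norm of a real matrix:
`‖M‖_∞ = sup {|Mv|_∞ : |v|_∞ = 1}`, where the norm on `Fin n → ℝ` is the sup norm. -/
noncomputable def opInfNorm {m n : ℕ} (M : Matrix (Fin m) (Fin n) ℝ) : ℝ :=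
  sSup {c : ℝ | ∃ v : Fin n → ℝ, ‖v‖ = 1 ∧ c = ‖M.mulVec v‖}


section OpInf
variable {a b : ℕ}

lemma mulVec_norm_le (M : Matrix (Fin a) (Fin b) ℝ) (v : Fin b → ℝ) :
    ‖M.mulVec v‖ ≤ ((b : ℝ) * ‖M‖) * ‖v‖ := by
  have hnn : (0:ℝ) ≤ ((b : ℝ) * ‖M‖) * ‖v‖ := by positivity
  refine (pi_norm_le_iff_of_nonneg hnn).mpr fun i => ?_
  have h1 : ‖M.mulVec v i‖ ≤ ∑ j, |M i j| * |v j| := by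
    rw [Real.norm_eq_abs]
    show |∑ j, M i j * v j| ≤ _
    refine (Finset.abs_sum_le_sum_abs _ _).trans (le_of_eq ?_)
    simp [abs_mul]
  refine h1.trans ?_
  have h2 : ∀ j : Fin b, |M i j| * |v j| ≤ ‖M‖ * ‖v‖ := fun j => by
    have hm : |M i j| ≤ ‖M‖ := by
      have := norm_le_pi_norm (M i) j
      have h2 := norm_le_pi_norm M i
      simp only [Real.norm_eq_abs] at this
      exact (le_trans this h2 :)
    have hv : |v j| ≤ ‖v‖ := norm_le_pi_norm v j
    exact mul_le_mul hm hv (abs_nonneg _) (norm_nonneg _)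
  calc ∑ j, |M i j| * |v j| ≤ ∑ _j : Fin b, ‖M‖ * ‖v‖ := Finset.sum_le_sum fun j _ => h2 j
    _ = ((b : ℝ) * ‖M‖) * ‖v‖ := by simp [mul_assoc]

lemma opInfNorm_nonneg (M : Matrix (Fin a) (Fin b) ℝ) : 0 ≤ opInfNorm M :=
  Real.sSup_nonneg (by rintro c ⟨v, hv, rfl⟩; positivity)

lemma opInfNorm_le (M : Matrix (Fin a) (Fin b) ℝ) : opInfNorm M ≤ (b : ℝ) * ‖M‖ := by
  refine Real.sSup_le ?_ (by positivity)
  rintro c ⟨v, hv, rfl⟩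
  simpa [hv] using mulVec_norm_le M v

lemma opInfNorm_mulVec_le (M : Matrix (Fin a) (Fin b) ℝ) (v : Fin b → ℝ) :
    ‖M.mulVec v‖ ≤ opInfNorm M * ‖v‖ := by
  rcases eq_or_ne v 0 with rfl | hv
  · simp [Matrix.mulVec_zero]
  · have hb : BddAbove {c : ℝ | ∃ w : Fin b → ℝ, ‖w‖ = 1 ∧ c = ‖M.mulVec w‖} := by
      refine ⟨(b : ℝ) * ‖M‖, ?_⟩
      rintro c ⟨w, hw, rfl⟩
      simpa [hw] using mulVec_norm_le M w
    have hvn : (0:ℝ) < ‖v‖ := norm_pos_iff.mpr hv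
    have hu : ‖(‖v‖⁻¹ • v)‖ = 1 := by
      rw [norm_smul, norm_inv, norm_norm, inv_mul_cancel₀ hvn.ne']
    have hmem : ‖M.mulVec (‖v‖⁻¹ • v)‖ ∈
        {c : ℝ | ∃ w : Fin b → ℝ, ‖w‖ = 1 ∧ c = ‖M.mulVec w‖} := ⟨_, hu, rfl⟩
    have hle := le_csSup hb hmem
    rw [Matrix.mulVec_smul, norm_smul, norm_inv, norm_norm] at hle
    have := mul_le_mul_of_nonneg_left hle hvn.le
    rw [← mul_assoc, mul_inv_cancel₀ hvn.ne', one_mul] at this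
    calc ‖M.mulVec v‖ = ‖v‖ * (‖v‖⁻¹ * ‖M.mulVec v‖) := by
          rw [← mul_assoc, mul_inv_cancel₀ hvn.ne', one_mul]
      _ ≤ ‖v‖ * opInfNorm M := by
          exact mul_le_mul_of_nonneg_left hle hvn.le
      _ = opInfNorm M * ‖v‖ := mul_comm _ _
end OpInf

/-- Lemma 4.1 of the paper: behaviour of the estimation error
`e = x - ξ` when the plant switches from mode `p` to mode `q` at time
`T ∈ ((k-1)τs, kτs]` while the controller stays in mode `p`; explicit formula
for `e(kτs)` and the resulting bound `|e(kτs)|_∞ ≤ δ̄ |ξ₀|_∞ + γ̄' E`.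
(The norm `‖·‖` on `Fin n → ℝ` is the sup norm `|·|_∞`; `NormedSpace.exp ℝ` is
the matrix exponential.) -/
theorem stmt_7 (n m : ℕ) (Ap Aq : Matrix (Fin n) (Fin n) ℝ)
    (Bp Bq : Matrix (Fin n) (Fin m) ℝ) (Kp : Matrix (Fin m) (Fin n) ℝ)
    (H : Matrix (Fin n) (Fin n) ℝ) (hH : H = (Aq - Ap) + (Bq - Bp) * Kp)
    (τs : ℝ) (hτs : 0 < τs) (k : ℕ) (hk : 1 ≤ k)
    (T τ : ℝ) (hT1 : ((k : ℝ) - 1) * τs < T) (hT2 : T ≤ (k : ℝ) * τs)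
    (hτ : τ = T - ((k : ℝ) - 1) * τs)
    (ξ₀ : Fin n → ℝ) (ξ : ℝ → Fin n → ℝ)
    (hξ : ∀ t : ℝ, ξ t = (NormedSpace.exp (t • (Ap + Bp * Kp))).mulVec ξ₀)
    (e : ℝ → Fin n → ℝ) (hecont : Continuous e)
    (he1 : ∀ t ∈ Set.Icc (0 : ℝ) T,
      HasDerivWithinAt e (Ap.mulVec (e t)) (Set.Icc (0 : ℝ) T) t)
    (he2 : ∀ t ∈ Set.Icc T ((k : ℝ) * τs),
      HasDerivWithinAt e (Aq.mulVec (e t) + H.mulVec (ξ t)) (Set.Icc T ((k : ℝ) * τs)) t)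
    (E : ℝ) (δb γb : ℝ)
    (hδ : δb = ⨆ τ' : Set.Icc (0 : ℝ) τs, opInfNorm (∫ t in (τ' : ℝ)..τs,
      NormedSpace.exp ((τs - t) • Aq) * H *
        NormedSpace.exp ((t + ((k : ℝ) - 1) * τs) • (Ap + Bp * Kp))))
    (hγ : γb = ⨆ τ' : Set.Icc (0 : ℝ) τs, opInfNorm (NormedSpace.exp ((τs - (τ' : ℝ)) • Aq) *
        NormedSpace.exp ((((k : ℝ) - 1) * τs + (τ' : ℝ)) • Ap))) :
    e ((k : ℝ) * τs) =
      (NormedSpace.exp ((τs - τ) • Aq) *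
        NormedSpace.exp ((((k : ℝ) - 1) * τs + τ) • Ap)).mulVec (e 0) +
      (∫ t in τ..τs, NormedSpace.exp ((τs - t) • Aq) * H *
        NormedSpace.exp ((t + ((k : ℝ) - 1) * τs) • (Ap + Bp * Kp))).mulVec ξ₀ ∧
    (‖e 0‖ ≤ E → ‖e ((k : ℝ) * τs)‖ ≤ δb * ‖ξ₀‖ + γb * E) := by
  have hk1 : (1:ℝ) ≤ (k:ℝ) := by exact_mod_cast hk
  have hc0 : (0:ℝ) ≤ ((k:ℝ)-1) * τs := by nlinarith
  have hT0 : (0:ℝ) ≤ T := le_trans hc0 hT1.le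
  have hTK : T ≤ (k:ℝ) * τs := hT2
  have hτ0 : 0 < τ := by rw [hτ]; linarith
  have hττs : τ ≤ τs := by rw [hτ]; nlinarith
  have hTval : T = ((k:ℝ)-1)*τs + τ := by rw [hτ]; ring
  have hXone : ∀ (A : Matrix (Fin n) (Fin n) ℝ) (s : ℝ),
      NormedSpace.exp (s • A) * NormedSpace.exp ((-s) • A) = 1 := by
    intro A s
    rw [← expM_add]
    have h : s + -s = 0 := by ring
    rw [h]; exact expM_zero A
  -- Step A : e T = exp (T • Ap) *ᵥ e 0
  have hstepA : e T = (NormedSpace.exp (T • Ap)).mulVec (e 0) := by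
    have hG : ∀ t ∈ Set.Icc (0:ℝ) T, HasDerivWithinAt
        (fun u => (NormedSpace.exp ((-u) • Ap)).mulVec (e u)) 0 (Set.Icc (0:ℝ) T) t := by
      intro t ht
      have hMent : ∀ i j, HasDerivAt (fun u : ℝ => NormedSpace.exp ((-u) • Ap) i j)
          ((-(Ap * NormedSpace.exp ((-t) • Ap))) i j) t := by
        intro i j
        have h1 := (expEntry_hasDerivAt Ap (-t) i j).comp t (hasDerivAt_neg t)
        simpa [Function.comp_def, Matrix.neg_apply, mul_neg_one] using h1
      have h2 := hasDerivWithinAt_matvec hMent (he1 t ht)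
      have hzero : (-(Ap * NormedSpace.exp ((-t) • Ap))).mulVec (e t)
          + (NormedSpace.exp ((-t) • Ap)).mulVec (Ap.mulVec (e t)) = 0 := by
        rw [Matrix.mulVec_mulVec, ← expM_comm, Matrix.neg_mulVec, neg_add_cancel]
      exact hzero ▸ h2
    have hcontG : Continuous fun u : ℝ => (NormedSpace.exp ((-u) • Ap)).mulVec (e u) :=
      continuous_matvec (fun i j => (expEntry_continuous Ap i j).comp continuous_neg) hecont
    have hconst := constant_of_has_deriv_right_zero (f := fun u : ℝ =>
        (NormedSpace.exp ((-u) • Ap)).mulVec (e u)) hcontG.continuousOn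
      (fun x hx => ((hG x (Set.Ico_subset_Icc_self hx)).mono_of_mem_nhdsWithin
        (Icc_mem_nhdsGE_of_mem hx)))
    have hTeq : (NormedSpace.exp ((-T) • Ap)).mulVec (e T)
        = (NormedSpace.exp ((-(0:ℝ)) • Ap)).mulVec (e 0) := hconst T (Set.right_mem_Icc.mpr hT0)
    have h0 : (NormedSpace.exp ((-(0:ℝ)) • Ap)).mulVec (e 0) = e 0 := by
      rw [neg_zero, expM_zero, Matrix.one_mulVec]
    rw [h0] at hTeq
    calc e T = ((NormedSpace.exp (T • Ap) * NormedSpace.exp ((-T) • Ap))).mulVec (e T) := by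
          rw [hXone, Matrix.one_mulVec]
      _ = (NormedSpace.exp (T • Ap)).mulVec
            ((NormedSpace.exp ((-T) • Ap)).mulVec (e T)) := (Matrix.mulVec_mulVec _ _ _).symm
      _ = (NormedSpace.exp (T • Ap)).mulVec (e 0) := by rw [hTeq]
  -- ξ and integrand continuity
  have hξc : Continuous ξ := by
    have hfx : ξ = fun t => (NormedSpace.exp (t • (Ap + Bp * Kp))).mulVec ξ₀ := funext hξ
    rw [hfx]
    exact continuous_matvec (fun i j => expEntry_continuous (Ap + Bp * Kp) i j) continuous_const
  have hgc : Continuous fun s : ℝ => (NormedSpace.exp ((-s) • Aq)).mulVec (H.mulVec (ξ s)) :=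
    continuous_matvec (fun i j => (expEntry_continuous Aq i j).comp continuous_neg)
      (continuous_matvec (fun i j => continuous_const) hξc)
  -- Step B : variation of constants on [T, kτs]
  have hstepB : (NormedSpace.exp ((-((k:ℝ)*τs)) • Aq)).mulVec (e ((k:ℝ)*τs))
      = (NormedSpace.exp ((-T) • Aq)).mulVec (e T)
        + ∫ s in T..((k:ℝ)*τs), (NormedSpace.exp ((-s) • Aq)).mulVec (H.mulVec (ξ s)) := by
    have hF : ∀ t ∈ Set.Icc T ((k:ℝ)*τs), HasDerivWithinAt
        (fun u => (NormedSpace.exp ((-u) • Aq)).mulVec (e u)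
          - ∫ s in T..u, (NormedSpace.exp ((-s) • Aq)).mulVec (H.mulVec (ξ s)))
        0 (Set.Icc T ((k:ℝ)*τs)) t := by
      intro t ht
      have hMent : ∀ i j, HasDerivAt (fun u : ℝ => NormedSpace.exp ((-u) • Aq) i j)
          ((-(Aq * NormedSpace.exp ((-t) • Aq))) i j) t := by
        intro i j
        have h1 := (expEntry_hasDerivAt Aq (-t) i j).comp t (hasDerivAt_neg t)
        simpa [Function.comp_def, Matrix.neg_apply, mul_neg_one] using h1
      have h2 := hasDerivWithinAt_matvec hMent (he2 t ht)
      have h3 := ((hgc.integral_hasStrictDerivAt T t).hasDerivAt.hasDerivWithinAt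
        (s := Set.Icc T ((k:ℝ)*τs)))
      have h4 := h2.sub h3
      have hzero : ((-(Aq * NormedSpace.exp ((-t) • Aq))).mulVec (e t)
          + (NormedSpace.exp ((-t) • Aq)).mulVec (Aq.mulVec (e t) + H.mulVec (ξ t)))
          - (NormedSpace.exp ((-t) • Aq)).mulVec (H.mulVec (ξ t)) = 0 := by
        rw [Matrix.mulVec_add, Matrix.mulVec_mulVec, ← expM_comm, Matrix.neg_mulVec]
        abel
      exact hzero ▸ h4
    have hcontF : Continuous fun u : ℝ => (NormedSpace.exp ((-u) • Aq)).mulVec (e u)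
        - ∫ s in T..u, (NormedSpace.exp ((-s) • Aq)).mulVec (H.mulVec (ξ s)) := by
      refine Continuous.sub
        (continuous_matvec (fun i j => (expEntry_continuous Aq i j).comp continuous_neg) hecont) ?_
      exact continuous_iff_continuousAt.mpr fun t =>
        ((hgc.integral_hasStrictDerivAt T t).hasDerivAt).continuousAt
    have hconst := constant_of_has_deriv_right_zero hcontF.continuousOn
      (fun x hx => ((hF x (Set.Ico_subset_Icc_self hx)).mono_of_mem_nhdsWithin
        (Icc_mem_nhdsGE_of_mem hx)))
    have hKeq : (NormedSpace.exp ((-((k:ℝ)*τs)) • Aq)).mulVec (e ((k:ℝ)*τs))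
          - (∫ s in T..((k:ℝ)*τs), (NormedSpace.exp ((-s) • Aq)).mulVec (H.mulVec (ξ s)))
        = (NormedSpace.exp ((-T) • Aq)).mulVec (e T)
          - ∫ s in T..T, (NormedSpace.exp ((-s) • Aq)).mulVec (H.mulVec (ξ s)) :=
      hconst ((k:ℝ)*τs) (Set.right_mem_Icc.mpr hTK)
    rw [intervalIntegral.integral_same, sub_zero] at hKeq
    exact sub_eq_iff_eq_add.mp hKeq
  -- the explicit formula with integral over [T, kτs]
  have hmain : e ((k:ℝ)*τs) =
      (NormedSpace.exp ((τs - τ) • Aq) *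
        NormedSpace.exp ((((k:ℝ)-1)*τs + τ) • Ap)).mulVec (e 0)
      + ∫ s in T..((k:ℝ)*τs),
          (NormedSpace.exp (((k:ℝ)*τs + -s) • Aq) * H
            * NormedSpace.exp (s • (Ap + Bp * Kp))).mulVec ξ₀ := by
    have h1 : e ((k:ℝ)*τs)
        = (NormedSpace.exp (((k:ℝ)*τs) • Aq)).mulVec
            ((NormedSpace.exp ((-((k:ℝ)*τs)) • Aq)).mulVec (e ((k:ℝ)*τs))) := by
      rw [Matrix.mulVec_mulVec, hXone, Matrix.one_mulVec]
    rw [h1, hstepB, Matrix.mulVec_add]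
    congr 1
    · rw [Matrix.mulVec_mulVec, ← expM_add]
      have h2 : (k:ℝ)*τs + -T = τs - τ := by rw [hτ]; ring
      rw [h2, hstepA, Matrix.mulVec_mulVec, hTval]
    · have hYI : (NormedSpace.exp (((k:ℝ)*τs) • Aq)).mulVec
            (∫ s in T..((k:ℝ)*τs), (NormedSpace.exp ((-s) • Aq)).mulVec (H.mulVec (ξ s)))
          = ∫ s in T..((k:ℝ)*τs), (NormedSpace.exp (((k:ℝ)*τs) • Aq)).mulVec
              ((NormedSpace.exp ((-s) • Aq)).mulVec (H.mulVec (ξ s))) :=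
        ((LinearMap.toContinuousLinearMap
          (Matrix.mulVecLin (NormedSpace.exp (((k:ℝ)*τs) • Aq)))).intervalIntegral_comp_comm
            (hgc.intervalIntegrable T ((k:ℝ)*τs))).symm
      rw [hYI]
      apply intervalIntegral.integral_congr
      intro s hs
      show (NormedSpace.exp (((k:ℝ)*τs) • Aq)).mulVec
          ((NormedSpace.exp ((-s) • Aq)).mulVec (H.mulVec (ξ s))) = _
      rw [hξ s]
      simp only [Matrix.mulVec_mulVec]
      rw [← Matrix.mul_assoc, ← Matrix.mul_assoc, ← expM_add]
  -- identify the right-hand side integral of the target with the [T, kτs] integral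
  have hΨc : Continuous fun t : ℝ => NormedSpace.exp ((τs - t) • Aq) * H *
      NormedSpace.exp ((t + ((k:ℝ)-1)*τs) • (Ap + Bp * Kp)) :=
    continuous_matrix_of_entries (continuous_entries_mul
      (continuous_entries_mul
        (fun i j => (expEntry_continuous Aq i j).comp (continuous_const.sub continuous_id))
        (fun _ _ => continuous_const))
      (fun i j => (expEntry_continuous (Ap + Bp * Kp) i j).comp
        (continuous_id.add continuous_const)))
  have hRHSint : (∫ t in τ..τs, NormedSpace.exp ((τs - t) • Aq) * H *
        NormedSpace.exp ((t + ((k:ℝ)-1)*τs) • (Ap + Bp * Kp))).mulVec ξ₀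
      = ∫ s in T..((k:ℝ)*τs),
          (NormedSpace.exp (((k:ℝ)*τs + -s) • Aq) * H
            * NormedSpace.exp (s • (Ap + Bp * Kp))).mulVec ξ₀ := by
    have h5 : (∫ t in τ..τs, NormedSpace.exp ((τs - t) • Aq) * H *
          NormedSpace.exp ((t + ((k:ℝ)-1)*τs) • (Ap + Bp * Kp))).mulVec ξ₀
        = ∫ t in τ..τs, (NormedSpace.exp ((τs - t) • Aq) * H *
            NormedSpace.exp ((t + ((k:ℝ)-1)*τs) • (Ap + Bp * Kp))).mulVec ξ₀ :=
      ((LinearMap.toContinuousLinearMap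
        ({ toFun := fun M : Matrix (Fin n) (Fin n) ℝ => M.mulVec ξ₀,
           map_add' := fun M N => Matrix.add_mulVec M N ξ₀,
           map_smul' := fun r M => Matrix.smul_mulVec r M ξ₀ } :
          Matrix (Fin n) (Fin n) ℝ →ₗ[ℝ] (Fin n → ℝ))).intervalIntegral_comp_comm
        (hΨc.intervalIntegrable τ τs)).symm
    rw [h5]
    have h7 := intervalIntegral.integral_comp_add_right (a := τ) (b := τs)
      (f := fun s => (NormedSpace.exp (((k:ℝ)*τs + -s) • Aq) * H *
          NormedSpace.exp (s • (Ap + Bp * Kp))).mulVec ξ₀) (((k:ℝ)-1)*τs)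
    have hb1 : τ + ((k:ℝ)-1)*τs = T := by rw [hτ]; ring
    have hb2 : τs + ((k:ℝ)-1)*τs = (k:ℝ)*τs := by ring
    rw [hb1, hb2] at h7
    rw [← h7]
    apply intervalIntegral.integral_congr
    intro t ht
    show _ = (NormedSpace.exp (((k:ℝ)*τs + -(t + ((k:ℝ)-1)*τs)) • Aq) * H *
        NormedSpace.exp ((t + ((k:ℝ)-1)*τs) • (Ap + Bp * Kp))).mulVec ξ₀
    have harg : (k:ℝ)*τs + -(t + ((k:ℝ)-1)*τs) = τs - t := by ring
    rw [harg]
  have hpart1 : e ((k:ℝ) * τs) =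
      (NormedSpace.exp ((τs - τ) • Aq) *
        NormedSpace.exp ((((k:ℝ)-1)*τs + τ) • Ap)).mulVec (e 0) +
      (∫ t in τ..τs, NormedSpace.exp ((τs - t) • Aq) * H *
        NormedSpace.exp ((t + ((k:ℝ)-1)*τs) • (Ap + Bp * Kp))).mulVec ξ₀ := by
    rw [hRHSint]; exact hmain
  refine ⟨hpart1, fun hE => ?_⟩
  -- Part 2 : the norm bound
  have hmem : τ ∈ Set.Icc (0:ℝ) τs := ⟨hτ0.le, hττs⟩
  have hγmatc : Continuous fun u : ℝ => NormedSpace.exp ((τs - u) • Aq) *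
      NormedSpace.exp ((((k:ℝ)-1)*τs + u) • Ap) :=
    continuous_matrix_of_entries (continuous_entries_mul
      (fun i j => (expEntry_continuous Aq i j).comp (continuous_const.sub continuous_id))
      (fun i j => (expEntry_continuous Ap i j).comp (continuous_const.add continuous_id)))
  obtain ⟨Cγ, hCγ⟩ := ((isCompact_Icc (a := (0:ℝ)) (b := τs)).image hγmatc.norm).bddAbove
  have hγbdd : BddAbove (Set.range fun τ' : Set.Icc (0:ℝ) τs =>
      opInfNorm (NormedSpace.exp ((τs - (τ':ℝ)) • Aq) *
        NormedSpace.exp ((((k:ℝ)-1)*τs + (τ':ℝ)) • Ap))) := by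
    refine ⟨(n:ℝ) * Cγ, ?_⟩
    rintro x ⟨τ', rfl⟩
    refine (opInfNorm_le _).trans
      (mul_le_mul_of_nonneg_left (hCγ (Set.mem_image_of_mem _ τ'.2)) (by positivity))
  have hγle : opInfNorm (NormedSpace.exp ((τs - τ) • Aq) *
      NormedSpace.exp ((((k:ℝ)-1)*τs + τ) • Ap)) ≤ γb := by
    rw [hγ]
    exact le_ciSup hγbdd ⟨τ, hmem⟩
  obtain ⟨CΨ, hCΨ⟩ := ((isCompact_Icc (a := (0:ℝ)) (b := τs)).image hΨc.norm).bddAbove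
  have hCΨ0 : 0 ≤ CΨ := le_trans (norm_nonneg _)
    (hCΨ (Set.mem_image_of_mem _ (Set.right_mem_Icc.mpr hτs.le)))
  have hδbdd : BddAbove (Set.range fun τ' : Set.Icc (0:ℝ) τs =>
      opInfNorm (∫ t in (τ':ℝ)..τs, NormedSpace.exp ((τs - t) • Aq) * H *
        NormedSpace.exp ((t + ((k:ℝ)-1)*τs) • (Ap + Bp * Kp)))) := by
    refine ⟨(n:ℝ) * (CΨ * τs), ?_⟩
    rintro x ⟨τ', rfl⟩
    refine (opInfNorm_le _).trans (mul_le_mul_of_nonneg_left ?_ (by positivity))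
    have hsub : ∀ x ∈ Set.uIoc (τ':ℝ) τs, x ∈ Set.Icc (0:ℝ) τs := by
      intro x hx
      exact ⟨le_trans (le_min τ'.2.1 hτs.le) hx.1.le, le_trans hx.2 (max_le τ'.2.2 le_rfl)⟩
    have hnorm := intervalIntegral.norm_integral_le_of_norm_le_const (C := CΨ)
      (a := (τ':ℝ)) (b := τs)
      (f := fun t => NormedSpace.exp ((τs - t) • Aq) * H *
        NormedSpace.exp ((t + ((k:ℝ)-1)*τs) • (Ap + Bp * Kp)))
      (fun x hx => hCΨ (Set.mem_image_of_mem _ (hsub x hx)))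
    refine hnorm.trans ?_
    have habs : |τs - (τ':ℝ)| ≤ τs := by
      rw [abs_of_nonneg (sub_nonneg.mpr τ'.2.2)]
      have := τ'.2.1; linarith
    exact mul_le_mul_of_nonneg_left habs hCΨ0
  have hδle : opInfNorm (∫ t in τ..τs, NormedSpace.exp ((τs - t) • Aq) * H *
      NormedSpace.exp ((t + ((k:ℝ)-1)*τs) • (Ap + Bp * Kp))) ≤ δb := by
    rw [hδ]
    exact le_ciSup hδbdd ⟨τ, hmem⟩
  rw [hpart1]
  refine (norm_add_le _ _).trans ?_
  have h1 : ‖(NormedSpace.exp ((τs - τ) • Aq) *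
      NormedSpace.exp ((((k:ℝ)-1)*τs + τ) • Ap)).mulVec (e 0)‖ ≤ γb * E :=
    (opInfNorm_mulVec_le _ _).trans
      (mul_le_mul hγle hE (norm_nonneg _) (le_trans (opInfNorm_nonneg _) hγle))
  have h2 : ‖(∫ t in τ..τs, NormedSpace.exp ((τs - t) • Aq) * H *
      NormedSpace.exp ((t + ((k:ℝ)-1)*τs) • (Ap + Bp * Kp))).mulVec ξ₀‖ ≤ δb * ‖ξ₀‖ :=
    (opInfNorm_mulVec_le _ _).trans (mul_le_mul_of_nonneg_right hδle (norm_nonneg _))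
  linarith
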